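/- For any Roman graph G of order n (that is, a graph with γ_R(G) = 2γ(G)) and any integer t ≥ 2: γ_R(S(G,t)) ≤ γ(G)·n^{t-2}·(2n − 1). -/

import Mathlib

variable {V : Type*}

/-- A Roman dominating function: every vertex with value 0 has a neighbor with value 2. -/
def IsRDF (G : SimpleGraph V) (f : V → Fin 3) : Prop :=
  ∀ v, f v = 0 → ∃ u, G.Adj u v ∧ f u = 2

/-- The weight of a Roman dominating function. -/
def romanWeight [Fintype V] (f : V → Fin 3) : ℕ := ∑ v, (f v : ℕ)

/-- The Roman domination number. -/
noncomputable def gammaR [Fintype V] (G : SimpleGraph V) : ℕ :=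
  sInf {k | ∃ f : V → Fin 3, IsRDF G f ∧ romanWeight f = k}

/-- A dominating set. -/
def IsDomSet (G : SimpleGraph V) (D : Set V) : Prop :=
  ∀ v, v ∈ D ∨ ∃ u ∈ D, G.Adj u v

/-- The domination number. -/
noncomputable def gamma [Fintype V] (G : SimpleGraph V) : ℕ :=
  sInf {k | ∃ D : Set V, IsDomSet G D ∧ D.ncard = k}

/-- The generalized Sierpiński graph `S(G,t)` on words of length `t` over `V`. -/
def sierpinski (G : SimpleGraph V) (t : ℕ) : SimpleGraph (Fin t → V) where
  Adj x y := ∃ i : Fin t, (∀ j, j < i → x j = y j) ∧ G.Adj (x i) (y i) ∧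
    (∀ j, i < j → x j = y i ∧ y j = x i)
  symm := by
    refine ⟨?_⟩
    rintro x y ⟨i, h1, h2, h3⟩
    exact ⟨i, fun j hj => (h1 j hj).symm, h2.symm, fun j hj => ⟨(h3 j hj).2, (h3 j hj).1⟩⟩
  loopless := by
    refine ⟨?_⟩
    rintro x ⟨i, -, h2, -⟩
    exact G.ne_of_adj h2 rfl

/-- Summing a function of one coordinate over a function space. -/
lemma sum_comp_eval {α : Type*} [Fintype α] [DecidableEq α] [Fintype V]
    (k : α) (h : V → ℕ) :
    ∑ r : α → V, h (r k) = (Fintype.card V) ^ (Fintype.card α - 1) * ∑ v, h v := by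
  rw [← Equiv.sum_comp (Equiv.funSplitAt k V).symm (fun r => h (r k))]
  have key : ∀ p : V × ({ j // j ≠ k } → V), ((Equiv.funSplitAt k V).symm p) k = p.1 := by
    intro p
    simp [Equiv.funSplitAt, Equiv.piSplitAt]
  simp only [key]
  rw [Fintype.sum_prod_type]
  simp only [Finset.sum_const, Finset.card_univ, smul_eq_mul]
  rw [Finset.mul_sum]
  have hc : Fintype.card ({ j // j ≠ k } → V) = Fintype.card V ^ (Fintype.card α - 1) := by
    rw [Fintype.card_fun]
    congr 1
    have := Fintype.card_subtype_compl (fun j : α => j = k)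
    simpa [Fintype.card_subtype_eq] using this
  simp [hc]

theorem stmt10 [Fintype V] (G : SimpleGraph V) (n : ℕ) (hn : Fintype.card V = n)
    (hRoman : gammaR G = 2 * gamma G) (t : ℕ) (ht : 2 ≤ t) :
    gammaR (sierpinski G t) ≤ gamma G * n ^ (t - 2) * (2 * n - 1) := by
  classical
  -- obtain a minimum dominating set
  have hne : {k | ∃ D : Set V, IsDomSet G D ∧ D.ncard = k}.Nonempty :=
    ⟨Fintype.card V, Set.univ, fun v => Or.inl (Set.mem_univ v), by rw [Set.ncard_univ, Nat.card_eq_fintype_card]⟩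
  obtain ⟨D, hD, hcard⟩ : gamma G ∈ {k | ∃ D : Set V, IsDomSet G D ∧ D.ncard = k} :=
    Nat.sInf_mem hne
  set i₀ : Fin t := ⟨t - 2, by omega⟩ with hi₀
  set i₁ : Fin t := ⟨t - 1, by omega⟩ with hi₁
  have h01 : i₀ ≠ i₁ := by
    simp only [hi₀, hi₁, Fin.mk.injEq, ne_eq]
    omega
  have h01lt : i₀ < i₁ := by
    simp only [hi₀, hi₁, Fin.lt_def]
    omega
  set f : (Fin t → V) → Fin 3 :=
    fun x => if x i₁ ∈ D then (if x i₀ = x i₁ then 1 else 2) else 0 with hf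
  have hRDF : IsRDF (sierpinski G t) f := by
    intro x hx
    have hx1 : x i₁ ∉ D := by
      intro hmem
      simp only [hf, if_pos hmem] at hx
      split at hx <;> simp_all
    obtain ⟨d, hdD, hadj⟩ : ∃ d ∈ D, G.Adj d (x i₁) := by
      rcases hD (x i₁) with h | h
      · exact absurd h hx1
      · exact h
    by_cases hd : d = x i₀
    · -- use the cross edge to the copy indexed by x i₁
      subst hd
      refine ⟨Function.update (Function.update x i₀ (x i₁)) i₁ (x i₀), ⟨i₀, ?_, ?_, ?_⟩, ?_⟩
      · intro j hj
        rw [Function.update_of_ne (ne_of_lt (hj.trans h01lt)),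
          Function.update_of_ne (ne_of_lt hj)]
      · rw [Function.update_of_ne h01, Function.update_self]
        exact hadj.symm
      · intro j hj
        have hj1 : j = i₁ := by
          have h1 := j.isLt
          have h2 : t - 2 < (j : ℕ) := hj
          apply Fin.ext
          show (j : ℕ) = t - 1
          omega
        subst hj1
        constructor
        · rw [Function.update_self]
        · rw [Function.update_of_ne h01, Function.update_self]
      · have e1 : Function.update (Function.update x i₀ (x i₁)) i₁ (x i₀) i₁ = x i₀ :=
          Function.update_self _ _ _
        have e0 : Function.update (Function.update x i₀ (x i₁)) i₁ (x i₀) i₀ = x i₁ := by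
          rw [Function.update_of_ne h01, Function.update_self]
        simp only [hf, e1, e0, if_pos hdD]
        rw [if_neg]
        intro h
        exact hx1 (h ▸ hdD)
    · -- use the edge inside the copy
      refine ⟨Function.update x i₁ d, ⟨i₁, ?_, ?_, ?_⟩, ?_⟩
      · intro j hj
        rw [Function.update_of_ne (ne_of_lt hj)]
      · rw [Function.update_self]
        exact hadj
      · intro j hj
        have h1 := j.isLt
        simp only [hi₁, Fin.lt_def] at hj
        omega
      · have e1 : Function.update x i₁ d i₁ = d := Function.update_self _ _ _
        have e0 : Function.update x i₁ d i₀ = x i₀ := Function.update_of_ne h01 _ _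
        simp only [hf, e1, e0, if_pos hdD]
        rw [if_neg (fun h => hd h.symm)]
  have hW : romanWeight f = gamma G * n ^ (t - 2) * (2 * n - 1) := by
    have hg : ∀ x : Fin t → V,
        (f x : ℕ) = (fun p : V × V => if p.2 ∈ D then (if p.1 = p.2 then 1 else 2) else 0)
          (x i₀, x i₁) := by
      intro x
      simp only [hf]
      split <;> [skip; rfl]
      split <;> rfl
    rw [romanWeight]
    calc ∑ x : Fin t → V, (f x : ℕ)
        = ∑ p : V × ({ j // j ≠ i₁ } → V),
            (if p.1 ∈ D then (if p.2 ⟨i₀, h01⟩ = p.1 then 1 else 2) else 0) := by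
          rw [← Equiv.sum_comp (Equiv.funSplitAt i₁ V).symm (fun x => (f x : ℕ))]
          refine Finset.sum_congr rfl fun p _ => ?_
          rw [hg]
          have e1 : ((Equiv.funSplitAt i₁ V).symm p) i₁ = p.1 := by
            simp [Equiv.funSplitAt, Equiv.piSplitAt]
          have e0 : ((Equiv.funSplitAt i₁ V).symm p) i₀ = p.2 ⟨i₀, h01⟩ := by
            simp [Equiv.funSplitAt, Equiv.piSplitAt, h01]
          rw [e1, e0]
      _ = ∑ b : V, ∑ r : { j // j ≠ i₁ } → V,
            (if b ∈ D then (if r ⟨i₀, h01⟩ = b then 1 else 2) else 0) := by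
          rw [Fintype.sum_prod_type]
      _ = ∑ b : V, n ^ (t - 2) *
            ∑ a : V, (if b ∈ D then (if a = b then 1 else 2) else 0) := by
          refine Finset.sum_congr rfl fun b _ => ?_
          rw [sum_comp_eval (⟨i₀, h01⟩ : { j // j ≠ i₁ })
            (fun a => if b ∈ D then (if a = b then 1 else 2) else 0)]
          have h2 : Fintype.card { j // j ≠ i₁ } = t - 1 := by
            simp only [ne_eq]
            have := Fintype.card_subtype_compl (fun j : Fin t => j = i₁)
            simp only [Fintype.card_subtype_eq, Fintype.card_fin] at this
            exact this
          have h3 : t - 1 - 1 = t - 2 := by omega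
          rw [h2, h3, hn]
      _ = ∑ b : V, n ^ (t - 2) * (if b ∈ D then 2 * n - 1 else 0) := by
          refine Finset.sum_congr rfl fun b _ => ?_
          congr 1
          by_cases hb : b ∈ D
          · simp only [if_pos hb]
            have key : ∑ a : V, ((if a = b then 1 else 2) + (if a = b then 1 else 0)) =
                2 * n := by
              have : ∀ a : V, ((if a = b then 1 else 2) + (if a = b then 1 else 0)) = 2 := by
                intro a; split <;> rfl
              simp only [this, Finset.sum_const, Finset.card_univ, hn, smul_eq_mul]
              ring
            rw [Finset.sum_add_distrib, Finset.sum_ite_eq' Finset.univ b (fun _ => 1)] at key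
            simp only [Finset.mem_univ, if_pos] at key
            omega
          · simp [hb]
      _ = n ^ (t - 2) * ∑ b : V, (if b ∈ D then 2 * n - 1 else 0) := by
          rw [Finset.mul_sum]
      _ = n ^ (t - 2) * (D.toFinset.card * (2 * n - 1)) := by
          congr 1
          have : ∀ b : V, (if b ∈ D then 2 * n - 1 else 0) =
              (if b ∈ D.toFinset then 2 * n - 1 else 0) := by
            intro b; simp [Set.mem_toFinset]
          simp only [this]
          rw [Finset.sum_ite_mem, Finset.univ_inter, Finset.sum_const, smul_eq_mul]
      _ = gamma G * n ^ (t - 2) * (2 * n - 1) := by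
          rw [← hcard, Set.ncard_eq_toFinset_card']
          ring
  calc gammaR (sierpinski G t) ≤ romanWeight f := Nat.sInf_le ⟨f, hRDF, rfl⟩
    _ = gamma G * n ^ (t - 2) * (2 * n - 1) := hW
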